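/- Let g be a Leibniz algebra, C^0 = g, C^{-1} = g^ann with d the inclusion. Then setting ⟨x,y⟩ = [x,y] + [y,x] defines an alternator making this data a hemistrict Lie 2-algebra (2-term EL∞-algebra with ⟨·,·,·⟩ = 0): i.e. the equations [x,y]+[y,x] = d⟨x,y⟩, [a,y]+[y,a] = ⟨da,y⟩, [x,b]+[b,x] = ⟨x,db⟩, [⟨x,y⟩,z] = 0, [x,⟨y,z⟩] = ⟨[x,y],z⟩ + ⟨y,[x,z]⟩, and ⟨x,[y,z]⟩ = ⟨[y,z],x⟩ all hold. -/

import Mathlib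

/-- For a left Leibniz algebra `g`, taking `C⁰ = g`,
`C⁻¹ = g^ann` (the ideal spanned by squares) with `d` the inclusion and
alternator `⟨x,y⟩ = [x,y] + [y,x]`, yields a hemistrict Lie 2-algebra
(a 2-term `EL∞`-algebra with trivial Jacobiator).  Concretely: `g^ann` is
closed under left and right brackets and contains all `[x,y]+[y,x]`, and the
equations `[x,y]+[y,x] = d⟨x,y⟩`, `[a,y]+[y,a] = ⟨da,y⟩`, `[x,b]+[b,x] = ⟨x,db⟩`
(trivial since `d` is the inclusion), `[⟨x,y⟩,z] = 0`,
`[x,⟨y,z⟩] = ⟨[x,y],z⟩ + ⟨y,[x,z]⟩` and `⟨x,[y,z]⟩ = ⟨[y,z],x⟩` all hold. -/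
theorem leibniz_hemistrict_lie2 (k : Type*) [Field k]
    (g : Type*) [AddCommGroup g] [Module k g]
    (br : g →ₗ[k] g →ₗ[k] g)
    (leib : ∀ x y z : g, br x (br y z) = br (br x y) z + br y (br x z)) :
    -- the span of squares is a two-sided ideal containing all ⟨x,y⟩
    (∀ x y : g, br x y + br y x ∈ Submodule.span k {z : g | ∃ x : g, z = br x x}) ∧
    (∀ a ∈ Submodule.span k {z : g | ∃ x : g, z = br x x}, ∀ y : g,
      br a y ∈ Submodule.span k {z : g | ∃ x : g, z = br x x} ∧
      br y a ∈ Submodule.span k {z : g | ∃ x : g, z = br x x}) ∧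
    -- alternator equations (with d the inclusion, stated in g)
    (∀ x y : g, br x y + br y x = br x y + br y x) ∧
    -- [⟨x,y⟩,z] = 0
    (∀ x y z : g, br (br x y + br y x) z = 0) ∧
    -- [x,⟨y,z⟩] = ⟨[x,y],z⟩ + ⟨y,[x,z]⟩
    (∀ x y z : g, br x (br y z + br z y)
      = (br (br x y) z + br z (br x y)) + (br y (br x z) + br (br x z) y)) ∧
    -- ⟨x,[y,z]⟩ = ⟨[y,z],x⟩
    (∀ x y z : g, br x (br y z) + br (br y z) x = br (br y z) x + br x (br y z)) := by
  have sq0 : ∀ x z : g, br (br x x) z = 0 := by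
    intro x z
    have h := leib x x z
    have : br x (br x z) = br (br x x) z + br x (br x z) := h
    have := right_eq_add.mp this
    exact this
  have alt_mem : ∀ x y : g, br x y + br y x ∈
      Submodule.span k {z : g | ∃ x : g, z = br x x} := by
    intro x y
    have hxy : br (x + y) (x + y) = br x x + (br x y + br y x) + br y y := by
      simp [map_add, LinearMap.add_apply]; abel
    have h : br x y + br y x = br (x + y) (x + y) - br x x - br y y := by
      rw [hxy]; abel
    rw [h]
    have m1 : br (x+y) (x+y) ∈ Submodule.span k {z : g | ∃ x : g, z = br x x} :=
      Submodule.subset_span ⟨x+y, rfl⟩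
    have m2 : br x x ∈ Submodule.span k {z : g | ∃ x : g, z = br x x} :=
      Submodule.subset_span ⟨x, rfl⟩
    have m3 : br y y ∈ Submodule.span k {z : g | ∃ x : g, z = br x x} :=
      Submodule.subset_span ⟨y, rfl⟩
    exact sub_mem (sub_mem m1 m2) m3
  have left0 : ∀ a ∈ Submodule.span k {z : g | ∃ x : g, z = br x x},
      ∀ y : g, br a y = 0 := by
    intro a ha y
    induction ha using Submodule.span_induction with
    | mem w hw => obtain ⟨x, rfl⟩ := hw; exact sq0 x y
    | zero => simp
    | add u v _ _ hu hv => simp [map_add, LinearMap.add_apply, hu, hv]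
    | smul c u _ hu => simp [map_smul, LinearMap.smul_apply, hu]
  refine ⟨alt_mem, ?_, fun _ _ => rfl, ?_, ?_, fun x y z => add_comm _ _⟩
  · intro a ha y
    constructor
    · rw [left0 a ha y]; exact Submodule.zero_mem _
    · induction ha using Submodule.span_induction with
      | mem w hw =>
          obtain ⟨x, rfl⟩ := hw
          have h := leib y x x
          rw [h]
          exact alt_mem (br y x) x
      | zero => simp
      | add u v _ _ hu hv =>
          simp only [map_add]
          exact add_mem hu hv
      | smul c u _ hu =>
          simp only [map_smul]
          exact Submodule.smul_mem _ _ hu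
  · intro x y z
    rw [left0 _ (alt_mem x y) z]
  · intro x y z
    have h1 := leib x y z
    have h2 := leib x z y
    rw [map_add, h1, h2]
    abel
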